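/- Suppose f and h both satisfy (G1) with constant K. Fix L, M and parameters Θ = (θ_{l,j}, w_{l,j})_{0≤l≤L−1, 1≤j≤M} with (1/(ML))∑_{l=0}^{L−1}∑_{j=1}^{M}(‖θ_{l,j}‖² + ‖w_{l,j}‖²) ≤ A². Then the discrete Transformer satisfies ‖T̂_Θ(H,t)‖_{2,col} ≤ ‖H‖_{2,col}·exp(K(1+A+A²)) at every grid point t ∈ {0, Δt/2, Δt, 3Δt/2, …, 1−Δt/2, 1}, where Δt = 1/L. -/

import Mathlib

open MeasureTheory Set

noncomputable section

/-- `D × (N+1)` real matrices, with the Frobenius (Euclidean) norm. -/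
abbrev Mat (D N : ℕ) : Type := EuclideanSpace ℝ (Fin D × Fin (N + 1))

/-- Parameter space `ℝ^p` with the Euclidean norm. -/
abbrev Par (p : ℕ) : Type := EuclideanSpace ℝ (Fin p)

/-- The `j`-th column of a matrix, as a Euclidean vector. -/
noncomputable def matCol {D N : ℕ} (Z : Mat D N) (j : Fin (N + 1)) :
    EuclideanSpace ℝ (Fin D) :=
  (WithLp.equiv 2 (Fin D → ℝ)).symm fun i => Z (i, j)

/-- Maximum ℓ²-norm of a column: `‖Z‖_{2,col}`. -/
noncomputable def colNorm {D N : ℕ} (Z : Mat D N) : ℝ :=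
  ⨆ j : Fin (N + 1), ‖matCol Z j‖

/-- The discrete Transformer: `T̂(t_{l+1})` is obtained from `T̂(t_l)` by one self-attention
half-step with encoder `f` followed by one feed-forward half-step with encoder `h`,
with step size `Δt/2 = 1/(2L)` and `M` heads. -/
noncomputable def Tdis {D N q : ℕ} (f h : Mat D N → Par q → Mat D N) (L M : ℕ)
    (θ w : ℕ → Fin M → Par q) (H : Mat D N) : ℕ → Mat D N
  | 0 => H
  | l + 1 =>
    let T := Tdis f h L M θ w H l
    let T' := T + (2 * (L : ℝ) * (M : ℝ))⁻¹ • ∑ j : Fin M, f T (θ l j)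
    T' + (2 * (L : ℝ) * (M : ℝ))⁻¹ • ∑ j : Fin M, h T' (w l j)

/-- The discrete Transformer at the half grid point `t_l + Δt/2`. -/
noncomputable def TdisHalf {D N q : ℕ} (f h : Mat D N → Par q → Mat D N) (L M : ℕ)
    (θ w : ℕ → Fin M → Par q) (H : Mat D N) (l : ℕ) : Mat D N :=
  Tdis f h L M θ w H l +
    (2 * (L : ℝ) * (M : ℝ))⁻¹ • ∑ j : Fin M, f (Tdis f h L M θ w H l) (θ l j)

variable {D N q : ℕ}

lemma norm_matCol_le (Z : Mat D N) (j : Fin (N+1)) : ‖matCol Z j‖ ≤ colNorm Z :=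
  le_ciSup (f := fun j => ‖matCol Z j‖) ((Set.finite_range _).bddAbove) j

lemma colNorm_nonneg (Z : Mat D N) : 0 ≤ colNorm Z :=
  (norm_nonneg _).trans (norm_matCol_le Z ⟨0, Nat.succ_pos N⟩)

lemma colNorm_le {Z : Mat D N} {C : ℝ} (h : ∀ j, ‖matCol Z j‖ ≤ C) : colNorm Z ≤ C :=
  ciSup_le h

lemma colNorm_add_le (X Y : Mat D N) : colNorm (X + Y) ≤ colNorm X + colNorm Y :=
  colNorm_le fun j => (norm_add_le (matCol X j) (matCol Y j)).trans
    (add_le_add (norm_matCol_le X j) (norm_matCol_le Y j))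

lemma colNorm_smul_le {a : ℝ} (ha : 0 ≤ a) (X : Mat D N) :
    colNorm (a • X) ≤ a * colNorm X :=
  colNorm_le fun j => by
    show ‖a • matCol X j‖ ≤ _
    rw [norm_smul, Real.norm_eq_abs, abs_of_nonneg ha]
    exact mul_le_mul_of_nonneg_left (norm_matCol_le X j) ha

lemma colNorm_zero : colNorm (0 : Mat D N) = 0 := by
  refine le_antisymm (colNorm_le fun j => ?_) (colNorm_nonneg 0)
  show ‖(0 : EuclideanSpace ℝ (Fin D))‖ ≤ 0
  simp

lemma colNorm_sum_le {ι : Type*} (s : Finset ι) (F : ι → Mat D N) :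
    colNorm (∑ i ∈ s, F i) ≤ ∑ i ∈ s, colNorm (F i) := by
  induction s using Finset.cons_induction with
  | empty => simp [colNorm_zero]
  | cons i s hi ih =>
      rw [Finset.sum_cons, Finset.sum_cons]
      exact (colNorm_add_le _ _).trans (add_le_add_right ih _)

lemma step_bound (g : Mat D N → Par q → Mat D N) (K c : ℝ) (hK : 0 < K) (hc : 0 ≤ c)
    (hG : ∀ T p, colNorm (g T p) ≤ K * colNorm T * (1 + ‖p‖ + ‖p‖ ^ 2))
    (M : ℕ) (T : Mat D N) (p : Fin M → Par q) :
    colNorm (T + c • ∑ j : Fin M, g T (p j)) ≤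
      colNorm T * Real.exp (c * K * ∑ j : Fin M, (1 + ‖p j‖ + ‖p j‖ ^ 2)) := by
  have h1 : colNorm (T + c • ∑ j : Fin M, g T (p j))
      ≤ colNorm T + c * ∑ j : Fin M, colNorm (g T (p j)) :=
    (colNorm_add_le _ _).trans (add_le_add_right ((colNorm_smul_le hc _).trans
      (mul_le_mul_of_nonneg_left (colNorm_sum_le _ _) hc)) _)
  have h2 : ∑ j : Fin M, colNorm (g T (p j))
      ≤ K * colNorm T * ∑ j : Fin M, (1 + ‖p j‖ + ‖p j‖ ^ 2) := by
    rw [Finset.mul_sum]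
    exact Finset.sum_le_sum fun j _ => hG T (p j)
  calc colNorm (T + c • ∑ j : Fin M, g T (p j))
      ≤ colNorm T + c * (K * colNorm T * ∑ j : Fin M, (1 + ‖p j‖ + ‖p j‖ ^ 2)) :=
        h1.trans (add_le_add_right (mul_le_mul_of_nonneg_left h2 hc) _)
    _ = colNorm T * (c * K * (∑ j : Fin M, (1 + ‖p j‖ + ‖p j‖ ^ 2)) + 1) := by ring
    _ ≤ colNorm T * Real.exp (c * K * ∑ j : Fin M, (1 + ‖p j‖ + ‖p j‖ ^ 2)) :=
        mul_le_mul_of_nonneg_left (Real.add_one_le_exp _) (colNorm_nonneg T)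

/-- column-norm bound for the discrete Transformer at all (full and half)
grid points. -/
theorem stmt6 (D N q : ℕ) (f h : Mat D N → Par q → Mat D N) (K A : ℝ)
    (hK : 0 < K) (hA : 0 ≤ A)
    (hG1f : ∀ (T : Mat D N) (θ : Par q),
      colNorm (f T θ) ≤ K * colNorm T * (1 + ‖θ‖ + ‖θ‖ ^ 2))
    (hG1h : ∀ (T : Mat D N) (w : Par q),
      colNorm (h T w) ≤ K * colNorm T * (1 + ‖w‖ + ‖w‖ ^ 2))
    (L M : ℕ) (hL : 0 < L) (hM : 0 < M)
    (θ w : ℕ → Fin M → Par q)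
    (hparam : (1 / ((M : ℝ) * L)) *
        ∑ l ∈ Finset.range L, ∑ j : Fin M, (‖θ l j‖ ^ 2 + ‖w l j‖ ^ 2) ≤ A ^ 2)
    (H : Mat D N) :
    (∀ l ≤ L, colNorm (Tdis f h L M θ w H l) ≤
        colNorm H * Real.exp (K * (1 + A + A ^ 2))) ∧
    (∀ l < L, colNorm (TdisHalf f h L M θ w H l) ≤
        colNorm H * Real.exp (K * (1 + A + A ^ 2))) := by
  have hLpos : (0:ℝ) < L := by exact_mod_cast hL
  have hMpos : (0:ℝ) < M := by exact_mod_cast hM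
  have hden : (0:ℝ) < 2 * (L:ℝ) * (M:ℝ) := by positivity
  set c : ℝ := (2 * (L : ℝ) * (M : ℝ))⁻¹ with hc_def
  have hc : 0 ≤ c := inv_nonneg.mpr hden.le
  set a : ℕ → ℝ := fun l => ∑ j : Fin M, (1 + ‖θ l j‖ + ‖θ l j‖ ^ 2) with ha_def
  set b : ℕ → ℝ := fun l => ∑ j : Fin M, (1 + ‖w l j‖ + ‖w l j‖ ^ 2) with hb_def
  have ha_nonneg : ∀ l, 0 ≤ a l := fun l => Finset.sum_nonneg fun j _ => by positivity
  have hb_nonneg : ∀ l, 0 ≤ b l := fun l => Finset.sum_nonneg fun j _ => by positivity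
  -- one-step bounds
  have hhalf : ∀ l, colNorm (TdisHalf f h L M θ w H l) ≤
      colNorm (Tdis f h L M θ w H l) * Real.exp (c * K * a l) :=
    fun l => step_bound f K c hK hc hG1f M _ (θ l)
  have hfull : ∀ l, colNorm (Tdis f h L M θ w H (l+1)) ≤
      colNorm (TdisHalf f h L M θ w H l) * Real.exp (c * K * b l) :=
    fun l => step_bound h K c hK hc hG1h M (TdisHalf f h L M θ w H l) (w l)
  -- iterated bound at full grid points
  have hmain : ∀ l, colNorm (Tdis f h L M θ w H l) ≤
      colNorm H * Real.exp (c * K * ∑ l' ∈ Finset.range l, (a l' + b l')) := by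
    intro l
    induction l with
    | zero => simp [Tdis]
    | succ l ih =>
      have h1 : colNorm (Tdis f h L M θ w H (l+1)) ≤
          colNorm H * Real.exp (c * K * ∑ l' ∈ Finset.range l, (a l' + b l'))
            * Real.exp (c * K * a l) * Real.exp (c * K * b l) :=
        (hfull l).trans (mul_le_mul_of_nonneg_right ((hhalf l).trans
          (mul_le_mul_of_nonneg_right ih (Real.exp_nonneg _))) (Real.exp_nonneg _))
      refine h1.trans (le_of_eq ?_)
      have he : c * K * ∑ l' ∈ Finset.range (l+1), (a l' + b l')
          = c * K * (∑ l' ∈ Finset.range l, (a l' + b l')) + c * K * a l + c * K * b l := by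
        rw [Finset.sum_range_succ]; ring
      rw [he, Real.exp_add, Real.exp_add]; ring
  -- bound the total exponent
  set S1 : ℝ := ∑ l ∈ Finset.range L, ∑ j : Fin M, (‖θ l j‖ + ‖w l j‖) with hS1_def
  set S2 : ℝ := ∑ l ∈ Finset.range L, ∑ j : Fin M, (‖θ l j‖ ^ 2 + ‖w l j‖ ^ 2) with hS2_def
  have hS1nn : 0 ≤ S1 :=
    Finset.sum_nonneg fun l _ => Finset.sum_nonneg fun j _ => by positivity
  have hS2nn : 0 ≤ S2 :=
    Finset.sum_nonneg fun l _ => Finset.sum_nonneg fun j _ => by positivity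
  have hMLpos : (0:ℝ) < (M:ℝ) * L := by positivity
  have hS2le : S2 ≤ (M:ℝ) * L * A ^ 2 := by
    have h := mul_le_mul_of_nonneg_left hparam hMLpos.le
    rwa [← mul_assoc, mul_one_div, div_self hMLpos.ne', one_mul] at h
  -- Cauchy–Schwarz for S1
  have hS1le : S1 ≤ 2 * (L:ℝ) * M * A := by
    have hprod : S1 = ∑ x ∈ Finset.range L ×ˢ (Finset.univ : Finset (Fin M)),
        (‖θ x.1 x.2‖ + ‖w x.1 x.2‖) := by
      rw [Finset.sum_product]
    have hcs := sq_sum_le_card_mul_sum_sq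
      (s := Finset.range L ×ˢ (Finset.univ : Finset (Fin M)))
      (f := fun x => ‖θ x.1 x.2‖ + ‖w x.1 x.2‖) (α := ℝ)
    have hcard : ((Finset.range L ×ˢ (Finset.univ : Finset (Fin M))).card : ℝ)
        = (L:ℝ) * M := by
      simp [Finset.card_product]
    have hsq2 : ∑ x ∈ Finset.range L ×ˢ (Finset.univ : Finset (Fin M)),
        (‖θ x.1 x.2‖ + ‖w x.1 x.2‖) ^ 2 ≤ 2 * S2 := by
      have : ∑ x ∈ Finset.range L ×ˢ (Finset.univ : Finset (Fin M)),
          (‖θ x.1 x.2‖ + ‖w x.1 x.2‖) ^ 2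
          ≤ ∑ x ∈ Finset.range L ×ˢ (Finset.univ : Finset (Fin M)),
            2 * (‖θ x.1 x.2‖ ^ 2 + ‖w x.1 x.2‖ ^ 2) :=
        Finset.sum_le_sum fun x _ => by nlinarith [sq_nonneg (‖θ x.1 x.2‖ - ‖w x.1 x.2‖)]
      refine this.trans (le_of_eq ?_)
      rw [← Finset.mul_sum, hS2_def, Finset.sum_product]
    have hsq : S1 ^ 2 ≤ (2 * (L:ℝ) * M * A) ^ 2 := by
      rw [hprod]
      calc (∑ x ∈ Finset.range L ×ˢ (Finset.univ : Finset (Fin M)),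
            (‖θ x.1 x.2‖ + ‖w x.1 x.2‖)) ^ 2
          ≤ ((L:ℝ) * M) * ∑ x ∈ Finset.range L ×ˢ (Finset.univ : Finset (Fin M)),
              (‖θ x.1 x.2‖ + ‖w x.1 x.2‖) ^ 2 := by rw [← hcard]; exact_mod_cast hcs
        _ ≤ ((L:ℝ) * M) * (2 * S2) := by
            exact mul_le_mul_of_nonneg_left hsq2 (by positivity)
        _ ≤ ((L:ℝ) * M) * (2 * ((M:ℝ) * L * A ^ 2)) := by
            refine mul_le_mul_of_nonneg_left ?_ (by positivity)
            linarith
        _ ≤ (2 * (L:ℝ) * M * A) ^ 2 := by nlinarith [sq_nonneg ((L:ℝ)*M*A)]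
    nlinarith [hsq, hS1nn, mul_nonneg (mul_nonneg (mul_nonneg (by norm_num : (0:ℝ) ≤ 2) hLpos.le) hMpos.le) hA]
  -- the total sum of per-layer weights
  have hab : ∀ l, a l + b l = 2 * (M:ℝ) + (∑ j : Fin M, (‖θ l j‖ + ‖w l j‖))
      + (∑ j : Fin M, (‖θ l j‖ ^ 2 + ‖w l j‖ ^ 2)) := by
    intro l
    have h2 : (2:ℝ) * (M:ℝ) = ∑ _j : Fin M, (2:ℝ) := by
      rw [Finset.sum_const, Finset.card_univ, Fintype.card_fin, nsmul_eq_mul]; ring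
    rw [ha_def, hb_def, h2, ← Finset.sum_add_distrib, ← Finset.sum_add_distrib,
      ← Finset.sum_add_distrib]
    exact Finset.sum_congr rfl fun j _ => by ring
  have hsum : ∑ l ∈ Finset.range L, (a l + b l) = 2 * (M:ℝ) * L + S1 + S2 := by
    rw [Finset.sum_congr rfl fun l _ => hab l, Finset.sum_add_distrib,
      Finset.sum_add_distrib, Finset.sum_const, Finset.card_range, nsmul_eq_mul,
      hS1_def, hS2_def]
    ring
  have hinv : c * (2 * (L:ℝ) * M) = 1 := inv_mul_cancel₀ hden.ne'
  have hE : c * K * ∑ l ∈ Finset.range L, (a l + b l) ≤ K * (1 + A + A ^ 2) := by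
    rw [hsum]
    have p1 : c * S1 ≤ A := by
      calc c * S1 ≤ c * (2 * (L:ℝ) * M * A) := mul_le_mul_of_nonneg_left hS1le hc
        _ = (c * (2 * (L:ℝ) * M)) * A := by ring
        _ = A := by rw [hinv, one_mul]
    have p2 : c * S2 ≤ A ^ 2 := by
      calc c * S2 ≤ c * ((M:ℝ) * L * A ^ 2) := mul_le_mul_of_nonneg_left hS2le hc
        _ = (c * (2 * (L:ℝ) * M)) * (A ^ 2 / 2) := by ring
        _ = A ^ 2 / 2 := by rw [hinv, one_mul]
        _ ≤ A ^ 2 := by nlinarith [sq_nonneg A]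
    have e1 : c * (2 * (M:ℝ) * L) = 1 := by rw [← hinv]; ring
    have hbase : c * (2 * (M:ℝ) * L + S1 + S2) ≤ 1 + A + A ^ 2 := by
      calc c * (2 * (M:ℝ) * L + S1 + S2)
          = c * (2 * (M:ℝ) * L) + c * S1 + c * S2 := by ring
        _ ≤ 1 + A + A ^ 2 := by rw [e1]; exact add_le_add (add_le_add le_rfl p1) p2
    calc c * K * (2 * (M:ℝ) * L + S1 + S2)
        = K * (c * (2 * (M:ℝ) * L + S1 + S2)) := by ring
      _ ≤ K * (1 + A + A ^ 2) := mul_le_mul_of_nonneg_left hbase hK.le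
  -- assemble
  have hckn : 0 ≤ c * K := mul_nonneg hc hK.le
  have key : ∀ x : ℝ, x ≤ c * K * ∑ l ∈ Finset.range L, (a l + b l) →
      colNorm H * Real.exp x ≤ colNorm H * Real.exp (K * (1 + A + A ^ 2)) := fun x hx =>
    mul_le_mul_of_nonneg_left (Real.exp_le_exp.mpr (hx.trans hE)) (colNorm_nonneg H)
  constructor
  · intro l hl
    refine (hmain l).trans (key _ ?_)
    refine mul_le_mul_of_nonneg_left ?_ hckn
    exact Finset.sum_le_sum_of_subset_of_nonneg (Finset.range_subset_range.mpr hl)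
      (fun i _ _ => add_nonneg (ha_nonneg i) (hb_nonneg i))
  · intro l hl
    have h1 : colNorm (TdisHalf f h L M θ w H l) ≤
        colNorm H * Real.exp (c * K * ∑ l' ∈ Finset.range l, (a l' + b l'))
          * Real.exp (c * K * a l) :=
      (hhalf l).trans (mul_le_mul_of_nonneg_right (hmain l) (Real.exp_nonneg _))
    have h2 : colNorm H * Real.exp (c * K * ∑ l' ∈ Finset.range l, (a l' + b l'))
          * Real.exp (c * K * a l)
        = colNorm H * Real.exp (c * K * (∑ l' ∈ Finset.range l, (a l' + b l')) + c * K * a l) := by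
      rw [Real.exp_add]; ring
    refine (h1.trans_eq h2).trans (key _ ?_)
    have hsub : (∑ l' ∈ Finset.range l, (a l' + b l')) + a l
        ≤ ∑ l' ∈ Finset.range L, (a l' + b l') := by
      have hstep : (∑ l' ∈ Finset.range l, (a l' + b l')) + a l
          ≤ ∑ l' ∈ Finset.range (l+1), (a l' + b l') := by
        rw [Finset.sum_range_succ]
        exact add_le_add le_rfl (le_add_of_nonneg_right (hb_nonneg l))
      refine hstep.trans ?_
      exact Finset.sum_le_sum_of_subset_of_nonneg (Finset.range_subset_range.mpr hl)
        (fun i _ _ => add_nonneg (ha_nonneg i) (hb_nonneg i))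
    calc c * K * (∑ l' ∈ Finset.range l, (a l' + b l')) + c * K * a l
        = c * K * ((∑ l' ∈ Finset.range l, (a l' + b l')) + a l) := by ring
      _ ≤ c * K * ∑ l' ∈ Finset.range L, (a l' + b l') :=
          mul_le_mul_of_nonneg_left hsub hckn
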